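/- Decryption correctness of the AA_β cryptosystem: Let d₁, d₂, v, m, k₁, k₂, a₃ be positive integers, and let e₁ = a₁ + a₂ with d₁ = a₁ - a₂ dividing e₁, and e₂ = a₁ + a₃ with a₂ + a₃ ≡ v (mod d₁). If k₂·v + m < d₁ and m < d₂ = v, then ((k₁·e₁ + k₂·e₂ + m) mod d₁) mod d₂ = m. -/
import Mathlib


theorem stmt2 (a₁ a₂ a₃ v m k₁ k₂ d₁ d₂ e₁ e₂ : ℤ)
    (ha₁ : 0 < a₁) (ha₂ : 0 < a₂) (ha₃ : 0 < a₃) (hv : 0 < v)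
    (hm : 0 < m) (hk₁ : 0 < k₁) (hk₂ : 0 < k₂)
    (hd₁ : d₁ = a₁ - a₂) (hd₁pos : 0 < d₁)
    (he₁ : e₁ = a₁ + a₂) (he₂ : e₂ = a₁ + a₃)
    (hdvd : d₁ ∣ e₁) (hcong : a₂ + a₃ ≡ v [ZMOD d₁])
    (hd₂ : d₂ = v)
    (hsize : k₂ * v + m < d₁) (hmv : m < d₂) :
    ((k₁ * e₁ + k₂ * e₂ + m) % d₁) % d₂ = m := by
  have he₁0 : e₁ ≡ 0 [ZMOD d₁] := (Int.modEq_zero_iff_dvd).mpr hdvd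
  have he₂v : e₂ ≡ v [ZMOD d₁] := by
    have h1 : e₂ ≡ a₂ + a₃ [ZMOD d₁] := by
      rw [Int.modEq_iff_dvd]
      exact ⟨-1, by rw [he₂, hd₁]; ring⟩
    exact h1.trans hcong
  have hC : (k₁ * e₁ + k₂ * e₂ + m) ≡ (k₁ * 0 + k₂ * v + m) [ZMOD d₁] :=
    (((Int.ModEq.refl k₁).mul he₁0).add ((Int.ModEq.refl k₂).mul he₂v)).add (Int.ModEq.refl m)
  have hCmod : (k₁ * e₁ + k₂ * e₂ + m) % d₁ = k₂ * v + m := by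
    have : (k₁ * e₁ + k₂ * e₂ + m) % d₁ = (k₂ * v + m) % d₁ := by
      have := hC
      simpa [Int.ModEq] using this
    rw [this, Int.emod_eq_of_lt (by positivity) hsize]
  rw [hCmod, hd₂, show k₂ * v + m = m + v * k₂ from by ring,
    Int.add_mul_emod_self_left, Int.emod_eq_of_lt hm.le (hd₂ ▸ hmv)]
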